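/- Let D be a Eulerian directed graph on n vertices with all degrees positive. For every 0 ≤ α ≤ 1, σ_α ≤ √(1 − 2α(1−α)λ_1), where λ_1 is the first non-trivial eigenvalue of the Laplacian of D. -/

import Mathlib

open Matrix Polynomial

noncomputable section

/-- The (out-)degree of a vertex in a directed graph with adjacency matrix `A`. -/
def ddeg {V : Type*} [Fintype V] (A : Matrix V V ℝ) (x : V) : ℝ := ∑ y, A x y

/-- The diagonal matrix `T^{-1/2}` of a directed graph. -/
def dInvSqrtT {V : Type*} [Fintype V] [DecidableEq V] (A : Matrix V V ℝ) : Matrix V V ℝ :=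
  Matrix.diagonal fun x => (Real.sqrt (ddeg A x))⁻¹

/-- The non-symmetric Laplacian `vecL = I - T^{-1/2} A T^{-1/2}` of a directed graph. -/
def dvecL {V : Type*} [Fintype V] [DecidableEq V] (A : Matrix V V ℝ) : Matrix V V ℝ :=
  1 - dInvSqrtT A * A * dInvSqrtT A

/-- The Laplacian `(vecL + vecLᵀ)/2` of a directed graph. -/
def dLap {V : Type*} [Fintype V] [DecidableEq V] (A : Matrix V V ℝ) : Matrix V V ℝ :=
  (1 / 2 : ℝ) • (dvecL A + (dvecL A)ᵀ)

/-- The matrix `L_α = I - (1-α) vecL = T^{1/2} P_α T^{-1/2}`. -/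
def dLalpha {V : Type*} [Fintype V] [DecidableEq V] (A : Matrix V V ℝ) (α : ℝ) :
    Matrix V V ℝ :=
  1 - (1 - α) • dvecL A

/-- The transition matrix `P_α = α I + (1-α) T⁻¹ A` of the α-lazy random walk. -/
def dTrans {V : Type*} [Fintype V] [DecidableEq V] (A : Matrix V V ℝ) (α : ℝ) :
    Matrix V V ℝ :=
  α • (1 : Matrix V V ℝ) + (1 - α) • ((Matrix.diagonal fun x => (ddeg A x)⁻¹) * A)

/-- The volume of a set of vertices of a directed graph. -/
def dvol {V : Type*} [Fintype V] (A : Matrix V V ℝ) (X : Finset V) : ℝ :=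
  ∑ x ∈ X, ddeg A x

/-- The unit vector `φ₀` with `φ₀(x) = √(d_x)/√(vol D)`. -/
def dphi {V : Type*} [Fintype V] (A : Matrix V V ℝ) : V → ℝ :=
  fun x => Real.sqrt (ddeg A x) / Real.sqrt (dvol A Finset.univ)

/-- Euclidean norm of a (row or column) vector. -/
def euclNorm {m : Type*} [Fintype m] (f : m → ℝ) : ℝ := Real.sqrt (∑ x, f x ^ 2)

/-- The set of values `‖L_α f‖ / ‖f‖` over nonzero vectors `f` orthogonal to `φ₀ᵀ`;
its greatest element is the second largest singular value `σ_α` of `L_α`. -/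
def sigmaSet {V : Type*} [Fintype V] [DecidableEq V] (A : Matrix V V ℝ) (α : ℝ) : Set ℝ :=
  {r | ∃ f : V → ℝ, f ≠ 0 ∧ (∑ x, f x * dphi A x) = 0 ∧
    r = euclNorm (dLalpha A α *ᵥ f) / euclNorm f}

/-- `μ` lists the eigenvalues of the square matrix `M` (with multiplicity)
in non-decreasing order. -/
def IsEigenSeq {m : Type*} [Fintype m] [DecidableEq m] (M : Matrix m m ℝ) {n : ℕ}
    (μ : Fin n → ℝ) : Prop :=
  Monotone μ ∧ M.charpoly = ∏ i, (X - C (μ i))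

section Aux

variable {V : Type*} [Fintype V] [DecidableEq V]

/- ## Characteristic polynomial tools -/

lemma my_charpoly_diagonal (d : V → ℝ) :
    (Matrix.diagonal d).charpoly = ∏ i, (X - C (d i)) := by
  have h : charmatrix (Matrix.diagonal d) = Matrix.diagonal (fun i => (X : ℝ[X]) - C (d i)) := by
    ext i j
    rcases eq_or_ne i j with rfl | hij
    · simp
    · simp [charmatrix_apply_ne _ _ _ hij, Matrix.diagonal_apply_ne _ hij,
        Matrix.diagonal_apply_ne d hij]
  rw [Matrix.charpoly, h, Matrix.det_diagonal]

lemma my_charpoly_conj (U B W : Matrix V V ℝ)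
    (hUW : U * W = 1) : (U * B * W).charpoly = B.charpoly := by
  have hmap : ∀ M N : Matrix V V ℝ, (M * N).map (C : ℝ →+* ℝ[X]) = M.map C * N.map C :=
    fun M N => Matrix.map_mul
  have hcomm : ∀ M : Matrix V V ℝ,
      M.map (C : ℝ →+* ℝ[X]) * Matrix.scalar V (X : ℝ[X])
        = Matrix.scalar V (X : ℝ[X]) * M.map C := by
    intro M
    exact ((Matrix.scalar_commute (X : ℝ[X]) (fun r' => Commute.all _ _) (M.map C)).eq).symm
  have hone : (1 : Matrix V V ℝ).map (C : ℝ →+* ℝ[X]) = 1 :=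
    Matrix.map_one _ (map_zero _) (map_one _)
  have hc : charmatrix (U * B * W) = U.map (C : ℝ →+* ℝ[X]) * charmatrix B * W.map C := by
    have h1 : charmatrix (U * B * W)
        = Matrix.scalar V (X : ℝ[X]) - U.map (C : ℝ →+* ℝ[X]) * B.map C * W.map C := by
      rw [charmatrix]
      congr 1
      simp only [RingHom.mapMatrix_apply, hmap]
    rw [h1, charmatrix, mul_sub, sub_mul]
    congr 1
    rw [hcomm U, mul_assoc, ← hmap, hUW, hone, mul_one]
  rw [Matrix.charpoly, hc, Matrix.det_mul, Matrix.det_mul, Matrix.charpoly]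
  have h2 : (U.map (C : ℝ →+* ℝ[X])).det * (W.map C).det = 1 := by
    rw [← Matrix.det_mul, ← hmap, hUW, hone, Matrix.det_one]
  calc (U.map (C : ℝ →+* ℝ[X])).det * (charmatrix B).det * (W.map C).det
      = (charmatrix B).det * ((U.map (C : ℝ →+* ℝ[X])).det * (W.map C).det) := by ring
    _ = (charmatrix B).det := by rw [h2, mul_one]

lemma my_herm_charpoly (L : Matrix V V ℝ) (hL : L.IsHermitian) :
    L.charpoly = ∏ i, (X - C (hL.eigenvalues i)) := by
  have hspec := hL.spectral_theorem
  have hdiag : Matrix.diagonal ((RCLike.ofReal : ℝ → ℝ) ∘ hL.eigenvalues)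
      = Matrix.diagonal hL.eigenvalues := by congr 1
  set U : Matrix V V ℝ := (hL.eigenvectorUnitary : Matrix V V ℝ) with hU
  have h1 : U * star U = 1 :=
    (Matrix.mem_unitaryGroup_iff).mp hL.eigenvectorUnitary.2
  calc L.charpoly = (U * Matrix.diagonal hL.eigenvalues * star U).charpoly := by
        rw [← hdiag]; exact congrArg Matrix.charpoly hspec
    _ = (Matrix.diagonal hL.eigenvalues).charpoly := my_charpoly_conj _ _ _ h1
    _ = ∏ i, (X - C (hL.eigenvalues i)) := my_charpoly_diagonal _

lemma prod_roots_eq {n : ℕ} (μ : Fin n → ℝ) :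
    (∏ i, (X - C (μ i))).roots = Finset.univ.val.map μ := by
  rw [Finset.prod_eq_multiset_prod,
    show Multiset.map (fun i => X - C (μ i)) Finset.univ.val
      = (Finset.univ.val.map μ).map (fun a => X - C a)
      from (Multiset.map_map (fun a : ℝ => (X : ℝ[X]) - C a) μ Finset.univ.val).symm]
  exact Polynomial.roots_multiset_prod_X_sub_C _

lemma prod_roots_eq' (ev : V → ℝ) :
    (∏ i, (X - C (ev i))).roots = Finset.univ.val.map ev := by
  rw [Finset.prod_eq_multiset_prod,
    show Multiset.map (fun i => X - C (ev i)) Finset.univ.val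
      = (Finset.univ.val.map ev).map (fun a => X - C a)
      from (Multiset.map_map (fun a : ℝ => (X : ℝ[X]) - C a) ev Finset.univ.val).symm]
  exact Polynomial.roots_multiset_prod_X_sub_C _

/- ## Quadratic form tools -/

variable (A : Matrix V V ℝ)

lemma Mmat_apply (x y : V) : (dInvSqrtT A * A * dInvSqrtT A) x y
    = (Real.sqrt (ddeg A x))⁻¹ * A x y * (Real.sqrt (ddeg A y))⁻¹ := by
  simp [dInvSqrtT, Matrix.mul_apply, Matrix.diagonal_apply, Finset.sum_ite_eq, Finset.sum_ite_eq',
    mul_comm]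

lemma sqA (h01 : ∀ x y, A x y = 0 ∨ A x y = 1) (x y : V) :
    Real.sqrt (A x y) * Real.sqrt (A x y) = A x y :=
  Real.mul_self_sqrt (by rcases h01 x y with h | h <;> simp [h])

lemma contraction (h01 : ∀ x y, A x y = 0 ∨ A x y = 1)
    (hEuler : ∀ x, (∑ y, A x y) = ∑ y, A y x)
    (hdegpos : ∀ x, 0 < ddeg A x) (f : V → ℝ) :
    ∑ x, ((dInvSqrtT A * A * dInvSqrtT A) *ᵥ f) x ^ 2 ≤ ∑ x, f x ^ 2 := by
  have hrow : ∀ x, ∑ y, A x y = ddeg A x := fun x => rfl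
  have hcol : ∀ y, ∑ x, A x y = ddeg A y := fun y => (hEuler y).symm
  have step1 : ∀ x, ((dInvSqrtT A * A * dInvSqrtT A) *ᵥ f) x ^ 2
      ≤ ∑ y, A x y * (ddeg A y)⁻¹ * f y ^ 2 := by
    intro x
    have hx : 0 < ddeg A x := hdegpos x
    have hmv : ((dInvSqrtT A * A * dInvSqrtT A) *ᵥ f) x
        = ∑ y, ((Real.sqrt (ddeg A x))⁻¹ * Real.sqrt (A x y))
            * (Real.sqrt (A x y) * (Real.sqrt (ddeg A y))⁻¹ * f y) := by
      rw [Matrix.mulVec, dotProduct]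
      refine Finset.sum_congr rfl fun y _ => ?_
      rw [Mmat_apply]
      have h2 := sqA A h01 x y
      calc (Real.sqrt (ddeg A x))⁻¹ * A x y * (Real.sqrt (ddeg A y))⁻¹ * f y
          = (Real.sqrt (ddeg A x))⁻¹ * (Real.sqrt (A x y) * Real.sqrt (A x y))
              * ((Real.sqrt (ddeg A y))⁻¹ * f y) := by rw [h2]; ring
        _ = ((Real.sqrt (ddeg A x))⁻¹ * Real.sqrt (A x y))
              * (Real.sqrt (A x y) * (Real.sqrt (ddeg A y))⁻¹ * f y) := by ring
    have hCS := Finset.sum_mul_sq_le_sq_mul_sq Finset.univ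
      (fun y => (Real.sqrt (ddeg A x))⁻¹ * Real.sqrt (A x y))
      (fun y => Real.sqrt (A x y) * (Real.sqrt (ddeg A y))⁻¹ * f y)
    have hsq : ∀ y, Real.sqrt (A x y) ^ 2 = A x y := fun y =>
      Real.sq_sqrt (by rcases h01 x y with h | h <;> simp [h])
    have hdd : ∀ z, ((Real.sqrt (ddeg A z))⁻¹) ^ 2 = (ddeg A z)⁻¹ := fun z => by
      rw [← Real.sqrt_inv, Real.sq_sqrt (inv_nonneg.mpr (hdegpos z).le)]
    have hu : ∑ y, ((Real.sqrt (ddeg A x))⁻¹ * Real.sqrt (A x y)) ^ 2 = 1 := by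
      have h4 : ∀ y, ((Real.sqrt (ddeg A x))⁻¹ * Real.sqrt (A x y)) ^ 2
          = (ddeg A x)⁻¹ * A x y := by
        intro y
        rw [mul_pow, hdd x, hsq y]
      rw [Finset.sum_congr rfl fun y _ => h4 y, ← Finset.mul_sum, hrow,
        inv_mul_cancel₀ (ne_of_gt hx)]
    have hv : ∀ y, (Real.sqrt (A x y) * (Real.sqrt (ddeg A y))⁻¹ * f y) ^ 2
        = A x y * (ddeg A y)⁻¹ * f y ^ 2 := by
      intro y
      calc (Real.sqrt (A x y) * (Real.sqrt (ddeg A y))⁻¹ * f y) ^ 2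
          = Real.sqrt (A x y) ^ 2 * ((Real.sqrt (ddeg A y))⁻¹) ^ 2 * f y ^ 2 := by ring
        _ = A x y * (ddeg A y)⁻¹ * f y ^ 2 := by rw [hsq y, hdd y]
    calc ((dInvSqrtT A * A * dInvSqrtT A) *ᵥ f) x ^ 2
        = (∑ y, ((Real.sqrt (ddeg A x))⁻¹ * Real.sqrt (A x y))
            * (Real.sqrt (A x y) * (Real.sqrt (ddeg A y))⁻¹ * f y)) ^ 2 := by rw [hmv]
      _ ≤ (∑ y, ((Real.sqrt (ddeg A x))⁻¹ * Real.sqrt (A x y)) ^ 2)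
            * ∑ y, (Real.sqrt (A x y) * (Real.sqrt (ddeg A y))⁻¹ * f y) ^ 2 := hCS
      _ = ∑ y, A x y * (ddeg A y)⁻¹ * f y ^ 2 := by
          rw [hu, one_mul]
          exact Finset.sum_congr rfl fun y _ => hv y
  calc ∑ x, ((dInvSqrtT A * A * dInvSqrtT A) *ᵥ f) x ^ 2
      ≤ ∑ x, ∑ y, A x y * (ddeg A y)⁻¹ * f y ^ 2 := Finset.sum_le_sum fun x _ => step1 x
    _ = ∑ y, (∑ x, A x y) * ((ddeg A y)⁻¹ * f y ^ 2) := by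
        rw [Finset.sum_comm]
        refine Finset.sum_congr rfl fun y _ => ?_
        rw [Finset.sum_mul]
        exact Finset.sum_congr rfl fun x _ => by ring
    _ = ∑ y, f y ^ 2 := by
        refine Finset.sum_congr rfl fun y _ => ?_
        rw [hcol y, ← mul_assoc, mul_inv_cancel₀ (ne_of_gt (hdegpos y)), one_mul]

lemma quad_transpose (B : Matrix V V ℝ) (f : V → ℝ) :
    ∑ x, f x * (Bᵀ *ᵥ f) x = ∑ x, f x * (B *ᵥ f) x := by
  simp only [Matrix.mulVec, dotProduct, Matrix.transpose_apply, Finset.mul_sum]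
  rw [Finset.sum_comm]
  exact Finset.sum_congr rfl fun x _ => Finset.sum_congr rfl fun y _ => by ring

lemma dLap_mulVec_apply (f : V → ℝ) (x : V) : (dLap A *ᵥ f) x
    = (1/2 : ℝ) * ((f x - ((dInvSqrtT A * A * dInvSqrtT A) *ᵥ f) x)
        + (f x - ((dInvSqrtT A * A * dInvSqrtT A)ᵀ *ᵥ f) x)) := by
  have h : dLap A = (1/2 : ℝ) • ((1 - dInvSqrtT A * A * dInvSqrtT A)
      + (1 - (dInvSqrtT A * A * dInvSqrtT A)ᵀ)) := by
    rw [dLap, dvecL]; congr 2; rw [Matrix.transpose_sub, Matrix.transpose_one]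
  rw [h, Matrix.smul_mulVec, Matrix.add_mulVec, Matrix.sub_mulVec, Matrix.sub_mulVec,
    Matrix.one_mulVec]
  simp [smul_eq_mul]

lemma quad_Lap (f : V → ℝ) : ∑ x, f x * (dLap A *ᵥ f) x
    = ∑ x, f x ^ 2 - ∑ x, f x * ((dInvSqrtT A * A * dInvSqrtT A) *ᵥ f) x := by
  have h1 : ∀ x, f x * (dLap A *ᵥ f) x
      = (1/2 : ℝ) * ((f x ^ 2 - f x * ((dInvSqrtT A * A * dInvSqrtT A) *ᵥ f) x)
          + (f x ^ 2 - f x * ((dInvSqrtT A * A * dInvSqrtT A)ᵀ *ᵥ f) x)) := by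
    intro x; rw [dLap_mulVec_apply]; ring
  rw [Finset.sum_congr rfl fun x _ => h1 x, ← Finset.mul_sum, Finset.sum_add_distrib,
    Finset.sum_sub_distrib, Finset.sum_sub_distrib, quad_transpose]
  ring

lemma quad_Lap_nonneg (h01 : ∀ x y, A x y = 0 ∨ A x y = 1)
    (hEuler : ∀ x, (∑ y, A x y) = ∑ y, A y x)
    (hdegpos : ∀ x, 0 < ddeg A x) (f : V → ℝ) :
    0 ≤ ∑ x, f x * (dLap A *ᵥ f) x := by
  rw [quad_Lap]
  set P := ∑ x, f x * ((dInvSqrtT A * A * dInvSqrtT A) *ᵥ f) x with hP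
  set S := ∑ x, f x ^ 2 with hS
  set G := ∑ x, ((dInvSqrtT A * A * dInvSqrtT A) *ᵥ f) x ^ 2 with hG
  have hCS : P ^ 2 ≤ S * G := Finset.sum_mul_sq_le_sq_mul_sq Finset.univ _ _
  have hC : G ≤ S := contraction A h01 hEuler hdegpos f
  have hS0 : 0 ≤ S := Finset.sum_nonneg fun x _ => sq_nonneg _
  nlinarith [sq_nonneg (P - S), sq_nonneg (P + S)]

lemma quad_M_le (h01 : ∀ x y, A x y = 0 ∨ A x y = 1)
    (hEuler : ∀ x, (∑ y, A x y) = ∑ y, A y x)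
    (hdegpos : ∀ x, 0 < ddeg A x) (f : V → ℝ) :
    ∑ x, f x * ((dInvSqrtT A * A * dInvSqrtT A) *ᵥ f) x ≤ ∑ x, f x ^ 2 := by
  have h := quad_Lap_nonneg A h01 hEuler hdegpos f
  rw [quad_Lap] at h
  linarith

/- ## φ₀ facts -/

lemma dvol_pos [Nonempty V] (hdegpos : ∀ x, 0 < ddeg A x) : 0 < dvol A Finset.univ :=
  Finset.sum_pos (fun x _ => hdegpos x) Finset.univ_nonempty

lemma phi_sq_sum [Nonempty V] (hdegpos : ∀ x, 0 < ddeg A x) :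
    ∑ x, dphi A x ^ 2 = 1 := by
  have hvol := dvol_pos A hdegpos
  have h1 : ∀ x, dphi A x ^ 2 = ddeg A x / dvol A Finset.univ := by
    intro x
    rw [dphi, div_pow, Real.sq_sqrt (hdegpos x).le, Real.sq_sqrt hvol.le]
  rw [Finset.sum_congr rfl fun x _ => h1 x, ← Finset.sum_div]
  exact div_self (ne_of_gt hvol)

lemma M_mulVec_phi (hdegpos : ∀ x, 0 < ddeg A x) :
    (dInvSqrtT A * A * dInvSqrtT A) *ᵥ dphi A = dphi A := by
  funext x
  have hterm : ∀ y, (dInvSqrtT A * A * dInvSqrtT A) x y * dphi A y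
      = (Real.sqrt (ddeg A x))⁻¹ * A x y / Real.sqrt (dvol A Finset.univ) := by
    intro y
    rw [Mmat_apply, dphi]
    have hy : Real.sqrt (ddeg A y) ≠ 0 := ne_of_gt (Real.sqrt_pos.mpr (hdegpos y))
    calc (Real.sqrt (ddeg A x))⁻¹ * A x y * (Real.sqrt (ddeg A y))⁻¹
          * (Real.sqrt (ddeg A y) / Real.sqrt (dvol A Finset.univ))
        = (Real.sqrt (ddeg A x))⁻¹ * A x y * ((Real.sqrt (ddeg A y))⁻¹ * Real.sqrt (ddeg A y))
          / Real.sqrt (dvol A Finset.univ) := by ring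
      _ = (Real.sqrt (ddeg A x))⁻¹ * A x y / Real.sqrt (dvol A Finset.univ) := by
          rw [inv_mul_cancel₀ hy, mul_one]
  rw [Matrix.mulVec, dotProduct, Finset.sum_congr rfl fun y _ => hterm y]
  have hsum : ∑ y, (Real.sqrt (ddeg A x))⁻¹ * A x y / Real.sqrt (dvol A Finset.univ)
      = (Real.sqrt (ddeg A x))⁻¹ * ddeg A x / Real.sqrt (dvol A Finset.univ) := by
    rw [← Finset.sum_div, ← Finset.mul_sum]; rfl
  rw [hsum, dphi]
  have hx : (Real.sqrt (ddeg A x))⁻¹ * ddeg A x = Real.sqrt (ddeg A x) := by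
    rw [inv_mul_eq_div, div_eq_iff (ne_of_gt (Real.sqrt_pos.mpr (hdegpos x)))]
    exact (Real.mul_self_sqrt (hdegpos x).le).symm
  rw [hx]

lemma MT_mulVec_phi (hEuler : ∀ x, (∑ y, A x y) = ∑ y, A y x)
    (hdegpos : ∀ x, 0 < ddeg A x) :
    (dInvSqrtT A * A * dInvSqrtT A)ᵀ *ᵥ dphi A = dphi A := by
  funext x
  have hterm : ∀ y, (dInvSqrtT A * A * dInvSqrtT A)ᵀ x y * dphi A y
      = (Real.sqrt (ddeg A x))⁻¹ * A y x / Real.sqrt (dvol A Finset.univ) := by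
    intro y
    rw [Matrix.transpose_apply, Mmat_apply, dphi]
    have hy : Real.sqrt (ddeg A y) ≠ 0 := ne_of_gt (Real.sqrt_pos.mpr (hdegpos y))
    calc (Real.sqrt (ddeg A y))⁻¹ * A y x * (Real.sqrt (ddeg A x))⁻¹
          * (Real.sqrt (ddeg A y) / Real.sqrt (dvol A Finset.univ))
        = (Real.sqrt (ddeg A x))⁻¹ * A y x * ((Real.sqrt (ddeg A y))⁻¹ * Real.sqrt (ddeg A y))
          / Real.sqrt (dvol A Finset.univ) := by ring
      _ = (Real.sqrt (ddeg A x))⁻¹ * A y x / Real.sqrt (dvol A Finset.univ) := by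
          rw [inv_mul_cancel₀ hy, mul_one]
  rw [Matrix.mulVec, dotProduct, Finset.sum_congr rfl fun y _ => hterm y]
  have hcolsum : ∑ y, A y x = ddeg A x := (hEuler x).symm
  have hsum : ∑ y, (Real.sqrt (ddeg A x))⁻¹ * A y x / Real.sqrt (dvol A Finset.univ)
      = (Real.sqrt (ddeg A x))⁻¹ * ddeg A x / Real.sqrt (dvol A Finset.univ) := by
    rw [← Finset.sum_div, ← Finset.mul_sum, hcolsum]
  rw [hsum, dphi]
  have hx : (Real.sqrt (ddeg A x))⁻¹ * ddeg A x = Real.sqrt (ddeg A x) := by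
    rw [inv_mul_eq_div, div_eq_iff (ne_of_gt (Real.sqrt_pos.mpr (hdegpos x)))]
    exact (Real.mul_self_sqrt (hdegpos x).le).symm
  rw [hx]

lemma Lap_mulVec_phi (hEuler : ∀ x, (∑ y, A x y) = ∑ y, A y x)
    (hdegpos : ∀ x, 0 < ddeg A x) : dLap A *ᵥ dphi A = 0 := by
  funext x
  rw [dLap_mulVec_apply, M_mulVec_phi A hdegpos, MT_mulVec_phi A hEuler hdegpos]
  simp

/- ## Spectral tools -/

def toE (f : V → ℝ) : EuclideanSpace ℝ V := (WithLp.equiv 2 (V → ℝ)).symm f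

lemma inner_toE (f g : V → ℝ) : inner ℝ (toE f) (toE g) = ∑ x, f x * g x := by
  simp [toE, PiLp.inner_apply, RCLike.inner_apply, mul_comm]

lemma parseval (L : Matrix V V ℝ) (hL : L.IsHermitian) (f g : V → ℝ) :
    ∑ x, f x * g x
      = ∑ i, hL.eigenvectorBasis.repr (toE f) i * hL.eigenvectorBasis.repr (toE g) i := by
  rw [← inner_toE, ← hL.eigenvectorBasis.repr.inner_map_map (toE f) (toE g)]
  set u := hL.eigenvectorBasis.repr (toE f)
  set v := hL.eigenvectorBasis.repr (toE g)
  show (inner ℝ u v : ℝ) = _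
  simp [PiLp.inner_apply, RCLike.inner_apply, mul_comm]

lemma sym_move (L : Matrix V V ℝ) (hsym : Lᵀ = L) (u f : V → ℝ) :
    ∑ x, u x * (L *ᵥ f) x = ∑ x, (L *ᵥ u) x * f x := by
  have h1 : ∑ x, u x * (L *ᵥ f) x = u ⬝ᵥ (L *ᵥ f) := rfl
  have h2 : ∑ x, (L *ᵥ u) x * f x = (L *ᵥ u) ⬝ᵥ f := rfl
  rw [h1, h2, Matrix.dotProduct_mulVec, ← Matrix.vecMul_transpose, hsym]

lemma repr_mulVec (L : Matrix V V ℝ) (hL : L.IsHermitian) (hsym : Lᵀ = L) (f : V → ℝ) (i : V) :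
    hL.eigenvectorBasis.repr (toE (L *ᵥ f)) i
      = hL.eigenvalues i * hL.eigenvectorBasis.repr (toE f) i := by
  rw [hL.eigenvectorBasis.repr_apply_apply, hL.eigenvectorBasis.repr_apply_apply]
  have hbi : toE ((hL.eigenvectorBasis i : V → ℝ)) = hL.eigenvectorBasis i := rfl
  have h1 : (inner ℝ (hL.eigenvectorBasis i) (toE (L *ᵥ f)) : ℝ)
      = ∑ x, (hL.eigenvectorBasis i : V → ℝ) x * (L *ᵥ f) x := by
    rw [← inner_toE, hbi]
  have h2 : (inner ℝ (hL.eigenvectorBasis i) (toE f) : ℝ)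
      = ∑ x, (hL.eigenvectorBasis i : V → ℝ) x * f x := by
    rw [← inner_toE, hbi]
  have h3 : (L *ᵥ (hL.eigenvectorBasis i : V → ℝ))
      = hL.eigenvalues i • (hL.eigenvectorBasis i : V → ℝ) := hL.mulVec_eigenvectorBasis i
  rw [h1, h2, sym_move L hsym, h3, Finset.mul_sum]
  exact Finset.sum_congr rfl fun x _ => by simp [Pi.smul_apply, smul_eq_mul]; ring

end Aux
section Ray

variable {V : Type*} [Fintype V] [DecidableEq V]

lemma rayleigh [Nonempty V] (A : Matrix V V ℝ)
    (h01 : ∀ x y, A x y = 0 ∨ A x y = 1)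
    (hEuler : ∀ x, (∑ y, A x y) = ∑ y, A y x)
    (hdegpos : ∀ x, 0 < ddeg A x)
    {n : ℕ} (hn2 : 2 ≤ n) (μ : Fin n → ℝ) (hmono : Monotone μ)
    (hchar : (dLap A).charpoly = ∏ i, (X - C (μ i)))
    (f : V → ℝ) (horth : ∑ x, f x * dphi A x = 0) :
    μ ⟨1, by omega⟩ * ∑ x, f x ^ 2 ≤ ∑ x, f x * (dLap A *ᵥ f) x := by
  classical
  have hsym : (dLap A)ᵀ = dLap A := by
    rw [dLap, Matrix.transpose_smul, Matrix.transpose_add, Matrix.transpose_transpose, add_comm]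
  have hL : (dLap A).IsHermitian := by
    rw [Matrix.IsHermitian, Matrix.conjTranspose]
    exact hsym
  set ev : V → ℝ := hL.eigenvalues with hev
  set b := hL.eigenvectorBasis with hb
  set c : V → ℝ := fun i => b.repr (toE f) i with hc
  set d : V → ℝ := fun i => b.repr (toE (dphi A)) i with hd
  have hquad : ∑ x, f x * ((dLap A) *ᵥ f) x = ∑ i, ev i * c i ^ 2 := by
    rw [parseval (dLap A) hL f ((dLap A) *ᵥ f)]
    refine Finset.sum_congr rfl fun i _ => ?_
    rw [repr_mulVec (dLap A) hL hsym f i]; ring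
  have hnormc : ∑ x, f x ^ 2 = ∑ i, c i ^ 2 := by
    have h := parseval (dLap A) hL f f
    calc ∑ x, f x ^ 2 = ∑ x, f x * f x := by
          exact Finset.sum_congr rfl fun x _ => pow_two (f x)
      _ = ∑ i, c i * c i := h
      _ = ∑ i, c i ^ 2 := Finset.sum_congr rfl fun i _ => (pow_two (c i)).symm
  have horthc : ∑ i, c i * d i = 0 := by
    rw [← parseval (dLap A) hL f (dphi A)]; exact horth
  have hLphi := Lap_mulVec_phi A hEuler hdegpos
  have hevd : ∀ i, ev i * d i = 0 := by
    intro i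
    have h := repr_mulVec (dLap A) hL hsym (dphi A) i
    rw [hLphi] at h
    have h0 : toE (0 : V → ℝ) = 0 := rfl
    rw [h0, map_zero] at h
    simpa using h.symm
  have hphi1 : ∑ i, d i ^ 2 = 1 := by
    have h := parseval (dLap A) hL (dphi A) (dphi A)
    have h2 := phi_sq_sum A hdegpos
    calc ∑ i, d i ^ 2 = ∑ i, d i * d i := Finset.sum_congr rfl fun i _ => pow_two (d i)
      _ = ∑ x, dphi A x * dphi A x := h.symm
      _ = ∑ x, dphi A x ^ 2 := Finset.sum_congr rfl fun x _ => (pow_two _).symm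
      _ = 1 := h2
  obtain ⟨i₀, hi₀⟩ : ∃ i, d i ≠ 0 := by
    by_contra h
    push_neg at h
    have hz : (∑ i, d i ^ 2) = 0 := Finset.sum_eq_zero fun i _ => by rw [h i]; norm_num
    rw [hz] at hphi1
    norm_num at hphi1
  have hevi₀ : ev i₀ = 0 := by
    rcases mul_eq_zero.mp (hevd i₀) with h | h
    · exact h
    · exact absurd h hi₀
  have hbnorm : ∀ i : V, ∑ x, (b i : V → ℝ) x * (b i : V → ℝ) x = 1 := by
    intro i
    have hbi : toE ((b i : V → ℝ)) = b i := rfl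
    rw [← inner_toE, hbi]
    have h1 : ‖b i‖ = 1 := b.orthonormal.1 i
    rw [real_inner_self_eq_norm_sq, h1]
    norm_num
  have hevnn : ∀ i, 0 ≤ ev i := by
    intro i
    have hg := quad_Lap_nonneg A h01 hEuler hdegpos (b i : V → ℝ)
    have h3 : (dLap A *ᵥ (b i : V → ℝ)) = ev i • (b i : V → ℝ) := hL.mulVec_eigenvectorBasis i
    rw [h3] at hg
    have hgg : ∑ x, (b i : V → ℝ) x * (ev i • (b i : V → ℝ)) x
        = ev i * ∑ x, (b i : V → ℝ) x * (b i : V → ℝ) x := by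
      rw [Finset.mul_sum]
      exact Finset.sum_congr rfl fun x _ => by simp [Pi.smul_apply, smul_eq_mul]; ring
    rw [hgg, hbnorm i, mul_one] at hg
    exact hg
  have hms : Finset.univ.val.map μ = Finset.univ.val.map ev := by
    have h := my_herm_charpoly (dLap A) hL
    have h2 : Finset.univ.val.map μ = (∏ i, (X - C (μ i))).roots := (prod_roots_eq μ).symm
    rw [h2, ← hchar, h, prod_roots_eq']
  set μ1 := μ (⟨1, by omega⟩ : Fin n) with hμ1
  by_cases hA : ∃ j, j ≠ i₀ ∧ ev j = 0
  · -- zero eigenvalue has multiplicity ≥ 2, so μ1 ≤ 0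
    obtain ⟨j, hji, hevj⟩ := hA
    have hcount : (Finset.univ.filter (fun k : Fin n => μ k ≤ 0)).card
        = (Finset.univ.filter (fun i : V => ev i ≤ 0)).card := by
      have e1 : (Finset.univ.filter (fun k : Fin n => μ k ≤ 0)).card
          = Multiset.countP (fun a : ℝ => a ≤ 0) (Finset.univ.val.map μ) := by
        rw [Finset.card_def, Finset.filter_val, Multiset.countP_map]
      have e2 : (Finset.univ.filter (fun i : V => ev i ≤ 0)).card
          = Multiset.countP (fun a : ℝ => a ≤ 0) (Finset.univ.val.map ev) := by
        rw [Finset.card_def, Finset.filter_val, Multiset.countP_map]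
      rw [e1, e2, hms]
    have h2le : 2 ≤ (Finset.univ.filter (fun i : V => ev i ≤ 0)).card := by
      have hsub : ({i₀, j} : Finset V) ⊆ Finset.univ.filter (fun i : V => ev i ≤ 0) := by
        intro x hx
        rcases Finset.mem_insert.mp hx with rfl | hx
        · exact Finset.mem_filter.mpr ⟨Finset.mem_univ _, le_of_eq hevi₀⟩
        · rw [Finset.mem_singleton.mp hx]
          exact Finset.mem_filter.mpr ⟨Finset.mem_univ _, le_of_eq hevj⟩
      have hcard : ({i₀, j} : Finset V).card = 2 := by
        rw [Finset.card_insert_of_notMem (by simpa using (Ne.symm hji)), Finset.card_singleton]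
      calc 2 = ({i₀, j} : Finset V).card := hcard.symm
        _ ≤ _ := Finset.card_le_card hsub
    have hmu1le : μ1 ≤ 0 := by
      by_contra hpos
      push_neg at hpos
      have hsub : (Finset.univ.filter (fun k : Fin n => μ k ≤ 0))
          ⊆ {(⟨0, by omega⟩ : Fin n)} := by
        intro k hk
        have hk' : μ k ≤ 0 := (Finset.mem_filter.mp hk).2
        rw [Finset.mem_singleton]
        by_contra hk0
        have h1k : (⟨1, by omega⟩ : Fin n) ≤ k := by
          have hne : k.val ≠ 0 := fun h => hk0 (Fin.ext h)
          show (1 : ℕ) ≤ k.val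
          omega
        have := hmono h1k
        rw [← hμ1] at this
        linarith
      have := Finset.card_le_card hsub
      rw [Finset.card_singleton, hcount] at this
      omega
    have hq0 : 0 ≤ ∑ i, ev i * c i ^ 2 :=
      Finset.sum_nonneg fun i _ => mul_nonneg (hevnn i) (sq_nonneg _)
    have hs0 : 0 ≤ ∑ i, c i ^ 2 := Finset.sum_nonneg fun i _ => sq_nonneg _
    rw [hquad, hnormc]
    nlinarith
  · -- zero eigenvalue is simple; f is orthogonal to the kernel
    push_neg at hA
    have hd0 : ∀ j, j ≠ i₀ → d j = 0 := by
      intro j hj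
      rcases mul_eq_zero.mp (hevd j) with h | h
      · exact absurd h (hA j hj)
      · exact h
    have hci₀ : c i₀ = 0 := by
      have hsum : ∑ i, c i * d i = c i₀ * d i₀ :=
        Finset.sum_eq_single i₀ (fun j _ hj => by rw [hd0 j hj, mul_zero])
          (fun h => absurd (Finset.mem_univ i₀) h)
      rw [hsum] at horthc
      rcases mul_eq_zero.mp horthc with h | h
      · exact h
      · exact absurd h hi₀
    have hkey : ∀ j, μ1 * c j ^ 2 ≤ ev j * c j ^ 2 := by
      intro j
      by_cases hj : j = i₀
      · subst hj; rw [hci₀]; simp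
      · have hevpos : 0 < ev j := (hevnn j).lt_of_ne (Ne.symm (hA j hj))
        have hevmem : ev j ∈ Finset.univ.val.map μ := by
          rw [hms]
          exact Multiset.mem_map.mpr ⟨j, Finset.mem_univ_val j, rfl⟩
        obtain ⟨k, _, hk⟩ := Multiset.mem_map.mp hevmem
        have h0mem : (0 : ℝ) ∈ Finset.univ.val.map μ := by
          rw [hms]
          exact Multiset.mem_map.mpr ⟨i₀, Finset.mem_univ_val i₀, hevi₀⟩
        obtain ⟨k₀, _, hk₀⟩ := Multiset.mem_map.mp h0mem
        have hk1 : (⟨1, by omega⟩ : Fin n) ≤ k := by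
          show (1 : ℕ) ≤ k.val
          by_contra hlt
          have hk00 : k.val = 0 := by omega
          have hle : k ≤ k₀ := by show k.val ≤ k₀.val; omega
          have := hmono hle
          rw [hk, hk₀] at this
          linarith
        have hle : μ1 ≤ ev j := hk ▸ hmono hk1
        exact mul_le_mul_of_nonneg_right hle (sq_nonneg _)
    rw [hquad, hnormc, Finset.mul_sum]
    exact Finset.sum_le_sum fun j _ => hkey j

end Ray

/-- `σ_α ≤ √(1 - 2α(1-α)λ₁)` for a Eulerian directed graph. -/
theorem stmt_6 {V : Type*} [Fintype V] [DecidableEq V]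
    (A : Matrix V V ℝ)
    (h01 : ∀ x y, A x y = 0 ∨ A x y = 1)
    (hEuler : ∀ x, (∑ y, A x y) = ∑ y, A y x)
    (hdegpos : ∀ x, 0 < ddeg A x)
    (n : ℕ) (hn : Fintype.card V = n) (hn2 : 2 ≤ n)
    (μ : Fin n → ℝ) (hμ : IsEigenSeq (dLap A) μ)
    (α : ℝ) (hα0 : 0 ≤ α) (hα1 : α ≤ 1)
    (σα : ℝ) (hσα : IsGreatest (sigmaSet A α) σα) :
    σα ≤ Real.sqrt (1 - 2 * α * (1 - α) * μ ⟨1, by omega⟩) := by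
  haveI hnV : Nonempty V := Fintype.card_pos_iff.mp (by omega)
  obtain ⟨hmono, hchar⟩ := hμ
  obtain ⟨f, hf0, horth, hfeq⟩ := hσα.1
  have hμ1 : μ (⟨1, by omega⟩ : Fin n) = μ ⟨1, by omega⟩ := rfl
  set K : ℝ := 1 - 2 * α * (1 - α) * μ ⟨1, by omega⟩ with hK
  set S : ℝ := ∑ x, f x ^ 2 with hS
  have hS0 : 0 < S := by
    obtain ⟨x, hx⟩ := Function.ne_iff.mp hf0
    rw [Pi.zero_apply] at hx
    exact Finset.sum_pos' (fun y _ => sq_nonneg _)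
      ⟨x, Finset.mem_univ x, by rcases lt_or_gt_of_ne hx with h | h <;> nlinarith⟩
  have hLa : ∀ x, (dLalpha A α *ᵥ f) x
      = α * f x + (1 - α) * ((dInvSqrtT A * A * dInvSqrtT A) *ᵥ f) x := by
    intro x
    rw [dLalpha, Matrix.sub_mulVec, Matrix.smul_mulVec, Matrix.one_mulVec, dvecL,
      Matrix.sub_mulVec, Matrix.one_mulVec]
    simp only [Pi.sub_apply, Pi.smul_apply, smul_eq_mul]
    ring
  set g : V → ℝ := (dInvSqrtT A * A * dInvSqrtT A) *ᵥ f with hg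
  set P : ℝ := ∑ x, f x * g x with hP
  set G : ℝ := ∑ x, g x ^ 2 with hG
  set Q : ℝ := ∑ x, f x * (dLap A *ᵥ f) x with hQ
  have hexp : ∑ x, (dLalpha A α *ᵥ f) x ^ 2
      = α ^ 2 * S + 2 * α * (1 - α) * P + (1 - α) ^ 2 * G := by
    have h1 : ∀ x, (dLalpha A α *ᵥ f) x ^ 2
        = α ^ 2 * f x ^ 2 + 2 * α * (1 - α) * (f x * g x) + (1 - α) ^ 2 * g x ^ 2 := by
      intro x; rw [hLa x]; ring
    rw [Finset.sum_congr rfl fun x _ => h1 x, Finset.sum_add_distrib, Finset.sum_add_distrib,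
      ← Finset.mul_sum, ← Finset.mul_sum, ← Finset.mul_sum]
  have hQbd : μ (⟨1, by omega⟩ : Fin n) * S ≤ Q :=
    rayleigh A h01 hEuler hdegpos hn2 μ hmono hchar f horth
  have hPSQ : P = S - Q := by
    have h := quad_Lap A f
    rw [← hQ, ← hS, ← hP] at h
    linarith
  have hGS : G ≤ S := contraction A h01 hEuler hdegpos f
  have hbound : ∑ x, (dLalpha A α *ᵥ f) x ^ 2 ≤ K * S := by
    rw [hexp, hPSQ, hK]
    have h1 : 0 ≤ α * (1 - α) := mul_nonneg hα0 (sub_nonneg.mpr hα1)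
    nlinarith [mul_nonneg h1 (sub_nonneg.mpr hQbd), mul_nonneg (sq_nonneg (1 - α))
      (sub_nonneg.mpr hGS)]
  have hK0 : 0 ≤ K := by
    have h0 : 0 ≤ K * S := le_trans
      (Finset.sum_nonneg fun x _ => sq_nonneg ((dLalpha A α *ᵥ f) x)) hbound
    exact le_of_mul_le_mul_right (by rw [zero_mul]; exact h0) hS0
  have hnfpos : 0 < euclNorm f := Real.sqrt_pos.mpr hS0
  rw [hfeq, div_le_iff₀ hnfpos]
  calc euclNorm (dLalpha A α *ᵥ f) = Real.sqrt (∑ x, (dLalpha A α *ᵥ f) x ^ 2) := rfl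
    _ ≤ Real.sqrt (K * S) := Real.sqrt_le_sqrt hbound
    _ = Real.sqrt K * Real.sqrt S := Real.sqrt_mul hK0 _
    _ = Real.sqrt K * euclNorm f := rfl

end
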